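/- arXiv:2605.10189 — 2 statements merged into one kernel-verified Lean document; each statement's English description precedes it below -/
import Mathlib

section
/- Let V be a nonempty finite set, p_1,...,p_M strictly positive probability distributions on V, and w_1,...,w_M strictly positive weights summing to 1. Then ∑_{v ∈ V} ∏_i p_i(v)^{w_i} = 1 if and only if p_1 = p_2 = ... = p_M. -/
open Finset

lemma amgm_eq_case {M : ℕ} (z w : Fin M → ℝ)
    (hz : ∀ i, 0 < z i) (hw : ∀ i, 0 < w i) (hw_sum : ∑ i, w i = 1)
    (heq : ∏ i, z i ^ w i = ∑ i, w i * z i) :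
    ∀ j k, z j = z k := by
  intro j k
  have hlog : Real.log (∑ i, w i • z i) ≤ ∑ i, w i • Real.log (z i) := by
    have : ∑ i, w i • Real.log (z i) = Real.log (∏ i, z i ^ w i) := by
      rw [Real.log_prod (s := univ) (f := fun i => z i ^ w i) (fun i _ => (Real.rpow_pos_of_pos (hz i) _).ne')]
      simp [Real.log_rpow (hz _), smul_eq_mul]
    rw [this, heq]
    simp [smul_eq_mul]
  exact strictConcaveOn_log_Ioi.eq_of_map_sum_eq (t := univ)
    (fun i _ => hw i) hw_sum (fun i _ => hz i) hlog (mem_univ j) (mem_univ k)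

theorem poe_normalizer_eq_one_iff
    {V : Type*} [Fintype V] [Nonempty V] {M : ℕ}
    (p : Fin M → V → ℝ) (w : Fin M → ℝ)
    (hp_pos : ∀ i v, 0 < p i v)
    (hp_sum : ∀ i, ∑ v, p i v = 1)
    (hw_pos : ∀ i, 0 < w i)
    (hw_sum : ∑ i, w i = 1) :
    (∑ v, ∏ i, (p i v) ^ (w i)) = 1 ↔ ∀ i j, p i = p j := by
  have hM : M ≠ 0 := by
    rintro rfl
    simp at hw_sum
  obtain ⟨i₀⟩ : Nonempty (Fin M) := ⟨⟨0, Nat.pos_of_ne_zero hM⟩⟩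
  have hA : ∑ v, ∑ i, w i * p i v = 1 := by
    rw [Finset.sum_comm]
    simp_rw [← Finset.mul_sum]
    simp [hp_sum, hw_sum]
  have hle : ∀ v ∈ (univ : Finset V), ∏ i, (p i v) ^ (w i) ≤ ∑ i, w i * p i v :=
    fun v _ => Real.geom_mean_le_arith_mean_weighted univ w (fun i => p i v)
      (fun i _ => (hw_pos i).le) hw_sum (fun i _ => (hp_pos i v).le)
  constructor
  · intro h
    have heq : ∀ v ∈ (univ : Finset V),
        ∏ i, (p i v) ^ (w i) = ∑ i, w i * p i v :=
      (Finset.sum_eq_sum_iff_of_le hle).mp (by rw [h, hA])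
    intro i j
    funext v
    exact amgm_eq_case (fun i => p i v) w (fun i => hp_pos i v) hw_pos hw_sum
      (heq v (mem_univ v)) i j
  · intro h
    have : ∀ v, ∏ i, (p i v) ^ (w i) = p i₀ v := by
      intro v
      have : ∀ i, p i v = p i₀ v := fun i => by rw [h i i₀]
      calc ∏ i, (p i v) ^ (w i) = ∏ i, (p i₀ v) ^ (w i) := by
            exact Finset.prod_congr rfl fun i _ => by rw [this i]
        _ = (p i₀ v) ^ (∑ i, w i) := (Real.rpow_sum_of_pos (hp_pos i₀ v) w univ).symm
        _ = p i₀ v := by rw [hw_sum, Real.rpow_one]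
    simp_rw [this]
    exact hp_sum i₀
end

section
/- Let V be a nonempty finite set, p_1,...,p_M strictly positive probability distributions on V, and w_1,...,w_M nonnegative weights summing to 1. Then the minimum value of ∑_i w_i · KL(q ‖ p_i) over probability distributions q equals −log Z, where Z = ∑_{v ∈ V} ∏_i p_i(v)^{w_i}. In particular, the minimum value is nonnegative. -/
noncomputable def KL {V : Type*} [Fintype V] (q p : V → ℝ) : ℝ :=
  ∑ v, if q v = 0 then 0 else q v * Real.log (q v / p v)

lemma gibbs_aux {V : Type*} [Fintype V] (q r : V → ℝ)
    (hq : ∀ v, 0 ≤ q v) (hqs : ∑ v, q v = 1)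
    (hr : ∀ v, 0 < r v) (hrs : ∑ v, r v = 1) : 0 ≤ KL q r := by
  have h : ∀ v, q v - r v ≤ (if q v = 0 then 0 else q v * Real.log (q v / r v)) := by
    intro v
    by_cases hv : q v = 0
    · simp [hv, (hr v).le]
    · have hqv : 0 < q v := lt_of_le_of_ne (hq v) (Ne.symm hv)
      rw [if_neg hv]
      have hlog : Real.log (r v / q v) ≤ r v / q v - 1 :=
        Real.log_le_sub_one_of_pos (div_pos (hr v) hqv)
      have heq : Real.log (q v / r v) = - Real.log (r v / q v) := by
        rw [← Real.log_inv, inv_div]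
      have h2 := mul_le_mul_of_nonneg_left hlog hqv.le
      have h3 : q v * (r v / q v - 1) = r v - q v := by field_simp
      rw [heq]
      nlinarith
  calc (0:ℝ) = ∑ v, q v - ∑ v, r v := by rw [hqs, hrs]; ring
    _ = ∑ v, (q v - r v) := (Finset.sum_sub_distrib _ _).symm
    _ ≤ KL q r := Finset.sum_le_sum fun v _ => h v

theorem weighted_KL_min_value
    {V : Type*} [Fintype V] [Nonempty V] {M : ℕ}
    (p : Fin M → V → ℝ) (w : Fin M → ℝ)
    (hp_pos : ∀ i v, 0 < p i v)
    (hp_sum : ∀ i, ∑ v, p i v = 1)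
    (hw_nonneg : ∀ i, 0 ≤ w i)
    (hw_sum : ∑ i, w i = 1) :
    IsLeast
      {x : ℝ | ∃ q : V → ℝ, (∀ v, 0 ≤ q v) ∧ (∑ v, q v = 1) ∧
        x = ∑ i, w i * KL q (p i)}
      (-Real.log (∑ v, ∏ i, (p i v) ^ (w i))) ∧
    0 ≤ -Real.log (∑ v, ∏ i, (p i v) ^ (w i)) := by
  set g : V → ℝ := fun v => ∏ i, (p i v) ^ (w i) with hg
  have hg_pos : ∀ v, 0 < g v := fun v =>
    Finset.prod_pos fun i _ => Real.rpow_pos_of_pos (hp_pos i v) _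
  set Z : ℝ := ∑ v, g v with hZ
  have hZ_pos : 0 < Z := Finset.sum_pos (fun v _ => hg_pos v) Finset.univ_nonempty
  set r : V → ℝ := fun v => g v / Z with hr
  have hr_pos : ∀ v, 0 < r v := fun v => div_pos (hg_pos v) hZ_pos
  have hr_sum : ∑ v, r v = 1 := by
    simp only [hr, ← Finset.sum_div]
    exact div_self hZ_pos.ne'
  have hlogg : ∀ v, Real.log (g v) = ∑ i, w i * Real.log (p i v) := by
    intro v
    rw [hg]
    rw [Real.log_prod (fun i _ => (Real.rpow_pos_of_pos (hp_pos i v) _).ne')]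
    exact Finset.sum_congr rfl fun i _ => Real.log_rpow (hp_pos i v) _
  -- key decomposition
  have key : ∀ q : V → ℝ, (∀ v, 0 ≤ q v) → (∑ v, q v = 1) →
      ∑ i, w i * KL q (p i) = KL q r - Real.log Z := by
    intro q hq hqs
    have h1 : ∑ i, w i * KL q (p i)
        = ∑ v, ((if q v = 0 then 0 else q v * Real.log (q v / r v))
            - (if q v = 0 then 0 else q v * Real.log Z)) := by
      simp only [KL, Finset.mul_sum]
      rw [Finset.sum_comm]
      refine Finset.sum_congr rfl fun v _ => ?_
      by_cases hv : q v = 0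
      · simp [hv]
      · simp only [if_neg hv]
        have hstep : ∀ i : Fin M, w i * (q v * Real.log (q v / p i v))
            = w i * (q v * Real.log (q v)) - q v * (w i * Real.log (p i v)) := by
          intro i
          rw [Real.log_div hv (hp_pos i v).ne']
          ring
        rw [Finset.sum_congr rfl (fun i _ => hstep i), Finset.sum_sub_distrib,
          ← Finset.sum_mul, hw_sum, ← Finset.mul_sum, ← hlogg v]
        rw [hr]
        rw [Real.log_div hv (hr_pos v).ne']
        simp only [hr]
        rw [Real.log_div (hg_pos v).ne' hZ_pos.ne']
        ring
    rw [h1, Finset.sum_sub_distrib]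
    have h2 : ∑ v, (if q v = 0 then 0 else q v * Real.log Z)
        = Real.log Z := by
      have : ∀ v, (if q v = 0 then 0 else q v * Real.log Z) = q v * Real.log Z := by
        intro v; by_cases hv : q v = 0 <;> simp [hv]
      rw [Finset.sum_congr rfl (fun v _ => this v), ← Finset.sum_mul, hqs, one_mul]
    rw [h2]
    rfl
  have hKLrr : KL r r = 0 := by
    unfold KL
    refine Finset.sum_eq_zero fun v _ => ?_
    rw [if_neg (hr_pos v).ne', div_self (hr_pos v).ne', Real.log_one, mul_zero]
  have hmem : -Real.log Z ∈
      {x : ℝ | ∃ q : V → ℝ, (∀ v, 0 ≤ q v) ∧ (∑ v, q v = 1) ∧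
        x = ∑ i, w i * KL q (p i)} := by
    refine ⟨r, fun v => (hr_pos v).le, hr_sum, ?_⟩
    rw [key r (fun v => (hr_pos v).le) hr_sum, hKLrr]
    ring
  refine ⟨⟨hmem, ?_⟩, ?_⟩
  · rintro x ⟨q, hq, hqs, rfl⟩
    rw [key q hq hqs]
    have := gibbs_aux q r hq hqs hr_pos hr_sum
    linarith
  · have : -Real.log Z = ∑ i, w i * KL r (p i) := by
      rw [key r (fun v => (hr_pos v).le) hr_sum, hKLrr]; ring
    rw [this]
    exact Finset.sum_nonneg fun i _ => mul_nonneg (hw_nonneg i)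
      (gibbs_aux r (p i) (fun v => (hr_pos v).le) hr_sum (fun v => hp_pos i v) (hp_sum i))
end
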